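/- Let CNOT be the 4×4 unitary !![1,0,0,0; 0,1,0,0; 0,0,0,1; 0,0,1,0]. Then the robustness of entanglement of the Choi state of CNOT satisfies 1 + 2·E(|Φ_CNOT⟩⟨Φ_CNOT|) = 3, i.e., E(|Φ_CNOT⟩⟨Φ_CNOT|) = 1. -/

import Mathlib

open Matrix Complex Kronecker
open scoped ComplexOrder

noncomputable section

/-- A density matrix: positive semidefinite with trace 1. -/
def IsDensityMatrix {d : Type*} [Fintype d] (ρ : Matrix d d ℂ) : Prop :=
  ρ.PosSemidef ∧ ρ.trace = 1

/-- A separable state on a bipartite system: a finite convex combination of Kronecker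
products of density matrices. -/
def SeparableState {dA dB : Type*} [Fintype dA] [Fintype dB]
    (ρ : Matrix (dA × dB) (dA × dB) ℂ) : Prop :=
  ∃ (n : ℕ) (p : Fin n → ℝ) (σ : Fin n → Matrix dA dA ℂ) (τ : Fin n → Matrix dB dB ℂ),
    (∀ k, 0 ≤ p k) ∧ (∑ k, p k) = 1 ∧
    (∀ k, IsDensityMatrix (σ k)) ∧ (∀ k, IsDensityMatrix (τ k)) ∧
    ρ = ∑ k, (p k : ℂ) • ((σ k) ⊗ₖ (τ k))

/-- The robustness of entanglement. -/
def robustness {dA dB : Type*} [Fintype dA] [Fintype dB]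
    (ρ : Matrix (dA × dB) (dA × dB) ℂ) : ℝ :=
  sInf { t : ℝ | 0 ≤ t ∧ ∃ σ : Matrix (dA × dB) (dA × dB) ℂ,
    SeparableState σ ∧ SeparableState (((1 + t : ℝ) : ℂ)⁻¹ • (ρ + (t : ℂ) • σ)) }

/-- γ(ρ): optimal one-norm of a quasiprobability decomposition into separable states. -/
def gammaSep {dA dB : Type*} [Fintype dA] [Fintype dB]
    (ρ : Matrix (dA × dB) (dA × dB) ℂ) : ℝ :=
  sInf { c : ℝ | ∃ (ap am : ℝ) (ρp ρm : Matrix (dA × dB) (dA × dB) ℂ),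
    0 ≤ ap ∧ 0 ≤ am ∧ SeparableState ρp ∧ SeparableState ρm ∧
    ρ = (ap : ℂ) • ρp - (am : ℂ) • ρm ∧ c = ap + am }

/-- Singular values of a complex matrix: square roots of eigenvalues of `Mᴴ * M`. -/
def singularValues {m n : Type*} [Fintype m] [Fintype n] [DecidableEq n]
    (M : Matrix m n ℂ) : n → ℝ :=
  fun i => Real.sqrt ((Matrix.isHermitian_conjTranspose_mul_self M).eigenvalues i)

/-- The Choi state (as a vector) of a two-qubit unitary `U` indexed by pairs:
component at `((a,a'),(b,b'))` is `(1/2) * U (a,b) (a',b')`, grouping systems as `AA'` vs `BB'`. -/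
def choiVec (U : Matrix (Fin 2 × Fin 2) (Fin 2 × Fin 2) ℂ) :
    (Fin 2 × Fin 2) × (Fin 2 × Fin 2) → ℂ :=
  fun q => (1 / 2 : ℂ) * U (q.1.1, q.2.1) (q.1.2, q.2.2)

/-- Regard an index in `Fin 2 × Fin 2` as an index in `Fin 4` via `(a,b) ↦ 2a+b`. -/
def pairIdx (p : Fin 2 × Fin 2) : Fin 4 :=
  ⟨2 * p.1.val + p.2.val, by have := p.1.isLt; have := p.2.isLt; omega⟩

/-- Regard a 4×4 matrix as a matrix indexed by pairs `(a,b) ∈ {0,1}²`. -/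
def toPair (U : Matrix (Fin 4) (Fin 4) ℂ) : Matrix (Fin 2 × Fin 2) (Fin 2 × Fin 2) ℂ :=
  Matrix.of fun i j => U (pairIdx i) (pairIdx j)

/-! ### Auxiliary development -/

abbrev Q4 := Fin 2 × Fin 2

def PhiC : (Fin 2 × Fin 2) × (Fin 2 × Fin 2) → ℂ :=
  choiVec (toPair !![1, 0, 0, 0; 0, 1, 0, 0; 0, 0, 0, 1; 0, 0, 1, 0])

lemma phi_val : ∀ a b c d : Fin 2, PhiC ((a,b),(c,d)) =
    if (a = 0 ∧ b = 0 ∧ c = d) ∨ (a = 1 ∧ b = 1 ∧ c ≠ d) then 1/2 else 0 := by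
  intro a b c d
  fin_cases a <;> fin_cases b <;> fin_cases c <;> fin_cases d <;>
    norm_num [PhiC, choiVec, toPair, pairIdx]

/-! Basic vectors on `Q4`. -/

def e0 : Q4 → ℂ := fun p => if p = (0,0) then 1 else 0
def e1 : Q4 → ℂ := fun p => if p = (1,1) then 1 else 0
def e2 : Q4 → ℂ := fun p => if p = (0,1) then 1 else 0
def e3 : Q4 → ℂ := fun p => if p = (1,0) then 1 else 0
def f0 : Q4 → ℂ := fun p => if p = (0,0) ∨ p = (1,1) then 1 else 0
def f1 : Q4 → ℂ := fun p => if p = (0,1) ∨ p = (1,0) then 1 else 0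
def f2 : Q4 → ℂ := fun p => if p = (0,0) then 1 else if p = (1,1) then -1 else 0
def f3 : Q4 → ℂ := fun p => if p = (0,1) then 1 else if p = (1,0) then -1 else 0

lemma form_e0 (σ : Matrix Q4 Q4 ℂ) : star e0 ⬝ᵥ σ *ᵥ e0 = σ (0,0) (0,0) := by
  simp [dotProduct, mulVec, Fintype.sum_prod_type, Fin.sum_univ_two, e0, Prod.ext_iff]
lemma form_e1 (σ : Matrix Q4 Q4 ℂ) : star e1 ⬝ᵥ σ *ᵥ e1 = σ (1,1) (1,1) := by
  simp [dotProduct, mulVec, Fintype.sum_prod_type, Fin.sum_univ_two, e1, Prod.ext_iff]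
lemma form_e2 (σ : Matrix Q4 Q4 ℂ) : star e2 ⬝ᵥ σ *ᵥ e2 = σ (0,1) (0,1) := by
  simp [dotProduct, mulVec, Fintype.sum_prod_type, Fin.sum_univ_two, e2, Prod.ext_iff]
lemma form_e3 (σ : Matrix Q4 Q4 ℂ) : star e3 ⬝ᵥ σ *ᵥ e3 = σ (1,0) (1,0) := by
  simp [dotProduct, mulVec, Fintype.sum_prod_type, Fin.sum_univ_two, e3, Prod.ext_iff]
lemma form_e01 (σ : Matrix Q4 Q4 ℂ) : star e0 ⬝ᵥ σ *ᵥ e1 = σ (0,0) (1,1) := by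
  simp [dotProduct, mulVec, Fintype.sum_prod_type, Fin.sum_univ_two, e0, e1, Prod.ext_iff]
lemma form_f0 (τ : Matrix Q4 Q4 ℂ) : star f0 ⬝ᵥ τ *ᵥ f0
    = τ (0,0) (0,0) + τ (0,0) (1,1) + τ (1,1) (0,0) + τ (1,1) (1,1) := by
  simp [dotProduct, mulVec, Fintype.sum_prod_type, Fin.sum_univ_two, f0, Prod.ext_iff]; ring
lemma form_f1 (τ : Matrix Q4 Q4 ℂ) : star f1 ⬝ᵥ τ *ᵥ f1
    = τ (0,1) (0,1) + τ (0,1) (1,0) + τ (1,0) (0,1) + τ (1,0) (1,0) := by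
  simp [dotProduct, mulVec, Fintype.sum_prod_type, Fin.sum_univ_two, f1, Prod.ext_iff]; ring
lemma form_f01 (τ : Matrix Q4 Q4 ℂ) : star f0 ⬝ᵥ τ *ᵥ f1
    = τ (0,0) (0,1) + τ (0,0) (1,0) + τ (1,1) (0,1) + τ (1,1) (1,0) := by
  simp [dotProduct, mulVec, Fintype.sum_prod_type, Fin.sum_univ_two, f0, f1, Prod.ext_iff]; ring
lemma form_f2 (τ : Matrix Q4 Q4 ℂ) : star f2 ⬝ᵥ τ *ᵥ f2
    = τ (0,0) (0,0) - τ (0,0) (1,1) - τ (1,1) (0,0) + τ (1,1) (1,1) := by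
  simp [dotProduct, mulVec, Fintype.sum_prod_type, Fin.sum_univ_two, f2, Prod.ext_iff]; ring
lemma form_f3 (τ : Matrix Q4 Q4 ℂ) : star f3 ⬝ᵥ τ *ᵥ f3
    = τ (0,1) (0,1) - τ (0,1) (1,0) - τ (1,0) (0,1) + τ (1,0) (1,0) := by
  simp [dotProduct, mulVec, Fintype.sum_prod_type, Fin.sum_univ_two, f3, Prod.ext_iff]; ring
lemma trace_expand (σ : Matrix Q4 Q4 ℂ) : σ.trace
    = σ (0,0) (0,0) + σ (0,1) (0,1) + σ (1,0) (1,0) + σ (1,1) (1,1) := by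
  simp [Matrix.trace, Matrix.diag, Fintype.sum_prod_type, Fin.sum_univ_two]; ring

/-- Cauchy–Schwarz for the sesquilinear form of a PSD matrix. -/
lemma psd_cs {n : Type*} [Fintype n] [DecidableEq n] {A : Matrix n n ℂ} (hA : A.PosSemidef)
    (x y : n → ℂ) :
    Complex.normSq (star x ⬝ᵥ A *ᵥ y) ≤ (star x ⬝ᵥ A *ᵥ x).re * (star y ⬝ᵥ A *ᵥ y).re := by
  obtain ⟨B, rfl⟩ : ∃ B : Matrix n n ℂ, A = Bᴴ * B := by
    open scoped MatrixOrder in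
    obtain ⟨B, rfl⟩ := CStarAlgebra.nonneg_iff_eq_star_mul_self.mp hA.nonneg
    exact ⟨B, rfl⟩
  have key : ∀ (z : n → ℂ) (w : EuclideanSpace ℂ n),
      star z ⬝ᵥ (Bᴴ * B) *ᵥ (WithLp.equiv 2 (n → ℂ)) w =
      @inner ℂ _ _ ((WithLp.equiv 2 (n → ℂ)).symm (B *ᵥ z))
        ((WithLp.equiv 2 (n → ℂ)).symm (B *ᵥ ((WithLp.equiv 2 (n → ℂ)) w))) := by
    intro z w
    rw [← mulVec_mulVec, dotProduct_mulVec, vecMul_conjTranspose, star_star]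
    simp [dotProduct, PiLp.inner_apply, RCLike.inner_apply]
    exact Finset.sum_congr rfl fun _ _ => mul_comm _ _
  have kxy := key x ((WithLp.equiv 2 (n → ℂ)).symm y)
  have kxx := key x ((WithLp.equiv 2 (n → ℂ)).symm x)
  have kyy := key y ((WithLp.equiv 2 (n → ℂ)).symm y)
  simp only [Equiv.apply_symm_apply] at kxy kxx kyy
  rw [kxy, kxx, kyy]
  set u : EuclideanSpace ℂ n := (WithLp.equiv 2 (n → ℂ)).symm (B *ᵥ x)
  set v : EuclideanSpace ℂ n := (WithLp.equiv 2 (n → ℂ)).symm (B *ᵥ y)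
  have h1 : Complex.normSq (@inner ℂ _ _ u v) = ‖@inner ℂ _ _ u v‖^2 := by
    rw [← Complex.sq_norm]
  have h2 := norm_inner_le_norm (𝕜 := ℂ) u v
  have h3 : (@inner ℂ _ _ u u) = ((‖u‖ : ℂ))^2 := inner_self_eq_norm_sq_to_K u
  have h4 : (@inner ℂ _ _ v v) = ((‖v‖ : ℂ))^2 := inner_self_eq_norm_sq_to_K v
  rw [h1, h3, h4]
  simp only [← Complex.ofReal_pow, Complex.ofReal_re]
  nlinarith [norm_nonneg u, norm_nonneg v, norm_nonneg (@inner ℂ _ _ u v)]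

set_option maxHeartbeats 1000000 in
/-- The central inequality: the Choi overlap of a product of density matrices is at most 1/2. -/
lemma key_ineq (σ τ : Matrix Q4 Q4 ℂ) (hσ : IsDensityMatrix σ) (hτ : IsDensityMatrix τ) :
    ((1/4 : ℂ) *
      (σ (0,0) (0,0) * (τ (0,0) (0,0) + τ (0,0) (1,1) + τ (1,1) (0,0) + τ (1,1) (1,1))
      + σ (1,1) (1,1) * (τ (0,1) (0,1) + τ (0,1) (1,0) + τ (1,0) (0,1) + τ (1,0) (1,0))
      + σ (0,0) (1,1) * (τ (0,0) (0,1) + τ (0,0) (1,0) + τ (1,1) (0,1) + τ (1,1) (1,0))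
      + σ (1,1) (0,0) * (τ (0,1) (0,0) + τ (0,1) (1,1) + τ (1,0) (0,0) + τ (1,0) (1,1)))).re ≤ 1/2 := by
  have hermτ : ∀ p q : Q4, τ q p = starRingEnd ℂ (τ p q) := fun p q => (hτ.1.1.apply q p).symm
  have hermσ : σ (1,1) (0,0) = starRingEnd ℂ (σ (0,0) (1,1)) := (hσ.1.1.apply _ _).symm
  have hA := hσ.1.dotProduct_mulVec_nonneg e0; rw [form_e0, Complex.nonneg_iff] at hA
  have hD := hσ.1.dotProduct_mulVec_nonneg e1; rw [form_e1, Complex.nonneg_iff] at hD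
  have hE2 := hσ.1.dotProduct_mulVec_nonneg e2; rw [form_e2, Complex.nonneg_iff] at hE2
  have hE3 := hσ.1.dotProduct_mulVec_nonneg e3; rw [form_e3, Complex.nonneg_iff] at hE3
  have hT0 := hτ.1.dotProduct_mulVec_nonneg f0; rw [form_f0, Complex.nonneg_iff] at hT0
  have hT1 := hτ.1.dotProduct_mulVec_nonneg f1; rw [form_f1, Complex.nonneg_iff] at hT1
  have hT2 := hτ.1.dotProduct_mulVec_nonneg f2; rw [form_f2, Complex.nonneg_iff] at hT2
  have hT3 := hτ.1.dotProduct_mulVec_nonneg f3; rw [form_f3, Complex.nonneg_iff] at hT3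
  have hCSσ := psd_cs hσ.1 e0 e1; rw [form_e0, form_e1, form_e01] at hCSσ
  have hCSτ := psd_cs hτ.1 f0 f1; rw [form_f0, form_f1, form_f01] at hCSτ
  have htrσ : σ.trace = 1 := hσ.2
  have htrτ : τ.trace = 1 := hτ.2
  rw [trace_expand] at htrσ htrτ
  have htrσre := congrArg Complex.re htrσ
  have htrτre := congrArg Complex.re htrτ
  simp only [Complex.add_re, Complex.one_re] at htrσre htrτre
  set A := (σ (0,0) (0,0)).re
  set D := (σ (1,1) (1,1)).re
  set cr := (σ (0,0) (1,1)).re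
  set ci := (σ (0,0) (1,1)).im
  have hsum : (τ (0,0) (0,0) + τ (0,0) (1,1) + τ (1,1) (0,0) + τ (1,1) (1,1)).re
      + (τ (0,1) (0,1) + τ (0,1) (1,0) + τ (1,0) (0,1) + τ (1,0) (1,0)).re ≤ 2 := by
    simp only [Complex.add_re, Complex.sub_re] at hT2 hT3 ⊢
    linarith [hT2.1, hT3.1, htrτre]
  have hsumσ : A + D ≤ 1 := by linarith [hE2.1, hE3.1, htrσre]
  rw [Complex.normSq_apply] at hCSσ hCSτ
  set T0 := (τ (0,0) (0,0) + τ (0,0) (1,1) + τ (1,1) (0,0) + τ (1,1) (1,1)).re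
  set T1 := (τ (0,1) (0,1) + τ (0,1) (1,0) + τ (1,0) (0,1) + τ (1,0) (1,0)).re
  set ur := (τ (0,0) (0,1) + τ (0,0) (1,0) + τ (1,1) (0,1) + τ (1,1) (1,0)).re
  set ui := (τ (0,0) (0,1) + τ (0,0) (1,0) + τ (1,1) (0,1) + τ (1,1) (1,0)).im
  have hgoal : ((1/4 : ℂ) *
      (σ (0,0) (0,0) * (τ (0,0) (0,0) + τ (0,0) (1,1) + τ (1,1) (0,0) + τ (1,1) (1,1))
      + σ (1,1) (1,1) * (τ (0,1) (0,1) + τ (0,1) (1,0) + τ (1,0) (0,1) + τ (1,0) (1,0))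
      + σ (0,0) (1,1) * (τ (0,0) (0,1) + τ (0,0) (1,0) + τ (1,1) (0,1) + τ (1,1) (1,0))
      + σ (1,1) (0,0) * (τ (0,1) (0,0) + τ (0,1) (1,1) + τ (1,0) (0,0) + τ (1,0) (1,1)))).re
      = (1/4) * (A * T0 + D * T1 + 2 * (cr * ur - ci * ui)) := by
    have hAim : (σ (0,0) (0,0)).im = 0 := hA.2.symm
    have hDim : (σ (1,1) (1,1)).im = 0 := hD.2.symm
    have hT0im : (τ (0,0) (0,0) + τ (0,0) (1,1) + τ (1,1) (0,0) + τ (1,1) (1,1)).im = 0 := hT0.2.symm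
    have hT1im : (τ (0,1) (0,1) + τ (0,1) (1,0) + τ (1,0) (0,1) + τ (1,0) (1,0)).im = 0 := hT1.2.symm
    have hu2 : τ (0,1) (0,0) + τ (0,1) (1,1) + τ (1,0) (0,0) + τ (1,0) (1,1)
        = starRingEnd ℂ (τ (0,0) (0,1) + τ (0,0) (1,0) + τ (1,1) (0,1) + τ (1,1) (1,0)) := by
      rw [map_add, map_add, map_add, ← hermτ, ← hermτ, ← hermτ, ← hermτ]; ring
    rw [hu2, hermσ]
    set w := τ (0,0) (0,1) + τ (0,0) (1,0) + τ (1,1) (0,1) + τ (1,1) (1,0) with hw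
    set z0 := τ (0,0) (0,0) + τ (0,0) (1,1) + τ (1,1) (0,0) + τ (1,1) (1,1) with hz0
    set z1 := τ (0,1) (0,1) + τ (0,1) (1,0) + τ (1,0) (0,1) + τ (1,0) (1,0) with hz1
    simp only [Complex.mul_re, Complex.add_re, Complex.add_im, Complex.mul_im,
      Complex.conj_re, Complex.conj_im, hAim, hDim, hT0im, hT1im]
    norm_num
    ring
  rw [hgoal]
  have hAn := hA.1; have hDn := hD.1; have hT0n := hT0.1; have hT1n := hT1.1
  have h1 : cr*cr + ci*ci ≤ A * D := hCSσ
  have h2 : ur*ur + ui*ui ≤ T0 * T1 := hCSτ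
  clear_value A D cr ci T0 T1 ur ui
  clear hCSσ hCSτ hA hD hT0 hT1 hE2 hE3 hT2 hT3 htrσ htrτ htrσre htrτre
    hermτ hermσ hgoal
  have hX2 : (cr * ur - ci * ui)^2 ≤ (A*D) * (T0*T1) := by
    nlinarith [sq_nonneg (cr*ui + ci*ur), mul_nonneg hAn hDn, mul_nonneg hT0n hT1n, h1, h2,
      sq_nonneg (cr*ur - ci*ui)]
  have h2X : 2 * (cr * ur - ci * ui) ≤ A*T1 + D*T0 := by
    nlinarith [hX2, sq_nonneg (A*T1 - D*T0), sq_nonneg (A*T1 + D*T0 - 2*(cr*ur - ci*ui)),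
      mul_nonneg hAn hT1n, mul_nonneg hDn hT0n]
  nlinarith [h2X, hsumσ, hsum, hAn, hDn, hT0n, hT1n,
    mul_nonneg hAn hT0n, mul_nonneg hDn hT1n,
    mul_nonneg (by linarith : (0:ℝ) ≤ A + D) (by linarith : (0:ℝ) ≤ T0 + T1)]

lemma overlap_kron (σ τ : Matrix Q4 Q4 ℂ) :
    star PhiC ⬝ᵥ ((σ ⊗ₖ τ) *ᵥ PhiC) = (1/4) *
      (σ (0,0) (0,0) * (τ (0,0) (0,0) + τ (0,0) (1,1) + τ (1,1) (0,0) + τ (1,1) (1,1))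
      + σ (1,1) (1,1) * (τ (0,1) (0,1) + τ (0,1) (1,0) + τ (1,0) (0,1) + τ (1,0) (1,0))
      + σ (0,0) (1,1) * (τ (0,0) (0,1) + τ (0,0) (1,0) + τ (1,1) (0,1) + τ (1,1) (1,0))
      + σ (1,1) (0,0) * (τ (0,1) (0,0) + τ (0,1) (1,1) + τ (1,0) (0,0) + τ (1,0) (1,1))) := by
  simp only [dotProduct, mulVec, Fintype.sum_prod_type, Fin.sum_univ_two, Pi.star_apply,
    kroneckerMap_apply, phi_val]
  norm_num
  ring

lemma key_prod {σ τ : Matrix Q4 Q4 ℂ} (hσ : IsDensityMatrix σ) (hτ : IsDensityMatrix τ) :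
    (star PhiC ⬝ᵥ ((σ ⊗ₖ τ) *ᵥ PhiC)).re ≤ 1/2 := by
  rw [overlap_kron]
  exact key_ineq σ τ hσ hτ

lemma kron_psd {dA dB : Type*} [Fintype dA] [Fintype dB] [DecidableEq dA] [DecidableEq dB]
    {A : Matrix dA dA ℂ} {B : Matrix dB dB ℂ}
    (hA : A.PosSemidef) (hB : B.PosSemidef) : (A ⊗ₖ B).PosSemidef := by
  obtain ⟨S, rfl⟩ : ∃ S : Matrix dA dA ℂ, A = Sᴴ * S := by
    open scoped MatrixOrder in
    obtain ⟨S, rfl⟩ := CStarAlgebra.nonneg_iff_eq_star_mul_self.mp hA.nonneg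
    exact ⟨S, rfl⟩
  obtain ⟨T, rfl⟩ : ∃ T : Matrix dB dB ℂ, B = Tᴴ * T := by
    open scoped MatrixOrder in
    obtain ⟨T, rfl⟩ := CStarAlgebra.nonneg_iff_eq_star_mul_self.mp hB.nonneg
    exact ⟨T, rfl⟩
  have h2 : (S ⊗ₖ T)ᴴ = Sᴴ ⊗ₖ Tᴴ := by
    ext ⟨i,j⟩ ⟨k,l⟩
    simp only [Matrix.conjTranspose_apply, Matrix.kroneckerMap_apply, star_mul']
    try ring
  have h1 : (Sᴴ * S) ⊗ₖ (Tᴴ * T) = (S ⊗ₖ T)ᴴ * (S ⊗ₖ T) := by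
    rw [h2, ← Matrix.mul_kronecker_mul]
  rw [h1]
  exact Matrix.posSemidef_conjTranspose_mul_self _

lemma dm_of_vec {d : Type*} [Fintype d] [DecidableEq d] (v : d → ℂ) (c : ℝ) (hc : 0 ≤ c)
    (h : (c : ℂ) * (∑ p, v p * starRingEnd ℂ (v p)) = 1) :
    IsDensityMatrix ((c : ℂ) • vecMulVec v (star v)) := by
  constructor
  · refine Matrix.PosSemidef.of_dotProduct_mulVec_nonneg ?_ ?_
    · ext i j
      simp only [Matrix.conjTranspose_apply, Matrix.smul_apply, Matrix.vecMulVec_apply,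
        Pi.star_apply, smul_eq_mul, star_mul', RCLike.star_def, Complex.conj_conj,
        _root_.map_mul, Complex.conj_ofReal]
      ring
    · intro x
      have hmv : (vecMulVec v (star v)) *ᵥ x = (star v ⬝ᵥ x) • v := by
        ext p
        simp only [Matrix.mulVec, Matrix.vecMulVec_apply, dotProduct, Finset.smul_sum,
          Pi.smul_apply, smul_eq_mul]
        rw [Finset.sum_mul]
        exact Finset.sum_congr rfl fun q _ => by ring
      rw [Matrix.smul_mulVec, hmv]
      have : star x ⬝ᵥ ((c : ℂ) • ((star v ⬝ᵥ x) • v))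
          = (c : ℂ) * ((star v ⬝ᵥ x) * (star x ⬝ᵥ v)) := by
        simp only [dotProduct, Pi.smul_apply, smul_eq_mul, Finset.mul_sum]
        exact Finset.sum_congr rfl fun q _ => by ring
      rw [this]
      have hsx : star x ⬝ᵥ v = starRingEnd ℂ (star v ⬝ᵥ x) := by
        simp only [dotProduct, map_sum, _root_.map_mul, Pi.star_apply, RCLike.star_def,
          Complex.conj_conj]
        exact Finset.sum_congr rfl fun q _ => by ring
      rw [hsx, Complex.mul_conj]
      rw [← Complex.ofReal_mul]
      exact Complex.zero_le_real.mpr (mul_nonneg hc (Complex.normSq_nonneg _))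
  · have : ((c : ℂ) • vecMulVec v (star v)).trace = (c:ℂ) * ∑ p, v p * starRingEnd ℂ (v p) := by
      simp [Matrix.trace, Matrix.diag, Matrix.vecMulVec_apply, Finset.mul_sum]
    rw [this, h]

/-! Linearity helpers for the overlap functional. -/

lemma mulVec_sum' {d : Type*} [Fintype d] {n : ℕ} (x : d → ℂ) (f : Fin n → Matrix d d ℂ) :
    (∑ k, f k) *ᵥ x = ∑ k, (f k) *ᵥ x := by
  ext i
  simp only [mulVec, dotProduct, Matrix.sum_apply, Finset.sum_apply, Finset.sum_mul]
  exact Finset.sum_comm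

lemma dot_sum {d : Type*} [Fintype d] {n : ℕ} (x : d → ℂ) (f : Fin n → Matrix d d ℂ) :
    star x ⬝ᵥ (∑ k, f k) *ᵥ x = ∑ k, star x ⬝ᵥ (f k) *ᵥ x := by
  rw [mulVec_sum']
  simp only [dotProduct, Finset.sum_apply, Finset.mul_sum]
  exact Finset.sum_comm

lemma dot_smul {d : Type*} [Fintype d] (x : d → ℂ) (c : ℂ) (M : Matrix d d ℂ) :
    star x ⬝ᵥ (c • M) *ᵥ x = c * (star x ⬝ᵥ M *ᵥ x) := by
  simp only [dotProduct, mulVec, Matrix.smul_apply, smul_eq_mul, Finset.mul_sum]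
  refine Finset.sum_congr rfl fun p _ => Finset.sum_congr rfl fun q _ => by ring

lemma sep_nonneg {w : Matrix (Q4 × Q4) (Q4 × Q4) ℂ} (h : SeparableState w) :
    0 ≤ star PhiC ⬝ᵥ w *ᵥ PhiC := by
  obtain ⟨n, p, σs, τs, hp, _, hσs, hτs, rfl⟩ := h
  rw [dot_sum]
  refine Finset.sum_nonneg fun k _ => ?_
  rw [dot_smul]
  exact mul_nonneg (Complex.zero_le_real.mpr (hp k)) ((kron_psd (hσs k).1 (hτs k).1).dotProduct_mulVec_nonneg PhiC)

lemma sep_le_half {w : Matrix (Q4 × Q4) (Q4 × Q4) ℂ} (h : SeparableState w) :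
    (star PhiC ⬝ᵥ w *ᵥ PhiC).re ≤ 1/2 := by
  obtain ⟨n, p, σs, τs, hp, hps, hσs, hτs, rfl⟩ := h
  rw [dot_sum, Complex.re_sum]
  have hb : ∀ k ∈ Finset.univ, (star PhiC ⬝ᵥ ((p k : ℂ) • (σs k ⊗ₖ τs k)) *ᵥ PhiC).re
      ≤ p k * (1/2) := by
    intro k _
    rw [dot_smul, Complex.re_ofReal_mul]
    exact mul_le_mul_of_nonneg_left (key_prod (hσs k) (hτs k)) (hp k)
  calc (∑ k, (star PhiC ⬝ᵥ ((p k : ℂ) • (σs k ⊗ₖ τs k)) *ᵥ PhiC).re)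
      ≤ ∑ k, p k * (1/2) := Finset.sum_le_sum hb
    _ = (∑ k, p k) * (1/2) := by rw [Finset.sum_mul]
    _ = 1/2 := by rw [hps]; ring

lemma vmv_mulVec {d : Type*} [Fintype d] (v x : d → ℂ) :
    (vecMulVec v (star v)) *ᵥ x = (star v ⬝ᵥ x) • v := by
  ext p
  simp only [Matrix.mulVec, Matrix.vecMulVec_apply, dotProduct, Pi.smul_apply, smul_eq_mul]
  rw [Finset.sum_mul]
  exact Finset.sum_congr rfl fun q _ => by ring

lemma phi_norm : star PhiC ⬝ᵥ PhiC = 1 := by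
  simp only [dotProduct, Fintype.sum_prod_type, Fin.sum_univ_two, Pi.star_apply, phi_val]
  norm_num

lemma rho_overlap : star PhiC ⬝ᵥ (vecMulVec PhiC (star PhiC)) *ᵥ PhiC = 1 := by
  rw [vmv_mulVec, phi_norm, one_smul, phi_norm]

/-! ### The explicit separable decompositions -/

def va : Fin 6 → Q4 → ℂ :=
  ![fun p => if p = (0,0) then 1 else 0,
    fun p => if p = (1,1) then 1 else 0,
    fun p => if p = (0,0) then 1 else if p = (1,1) then 1 else 0,
    fun p => if p = (0,0) then 1 else if p = (1,1) then -1 else 0,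
    fun p => if p = (0,0) then 1 else if p = (1,1) then I else 0,
    fun p => if p = (0,0) then 1 else if p = (1,1) then -I else 0]
def ca : Fin 6 → ℝ := ![1, 1, 1/2, 1/2, 1/2, 1/2]
def vb : Fin 6 → Q4 → ℂ :=
  ![fun p => if p = (0,0) ∨ p = (1,1) then 1 else 0,
    fun p => if p = (0,1) ∨ p = (1,0) then 1 else 0,
    fun _ => 1,
    fun p => if p = (0,0) ∨ p = (1,1) then 1 else -1,
    fun p => if p = (0,0) ∨ p = (1,1) then 1 else I,
    fun p => if p = (0,0) ∨ p = (1,1) then 1 else -I]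
def cb : Fin 6 → ℝ := ![1/2, 1/2, 1/4, 1/4, 1/4, 1/4]

def Amat (k : Fin 6) : Matrix Q4 Q4 ℂ := (ca k : ℂ) • vecMulVec (va k) (star (va k))
def Bmat (k : Fin 6) : Matrix Q4 Q4 ℂ := (cb k : ℂ) • vecMulVec (vb k) (star (vb k))

def sig6 : Matrix (Q4 × Q4) (Q4 × Q4) ℂ :=
  ((1/6:ℝ):ℂ) • (Amat 0 ⊗ₖ Bmat 1) + ((1/6:ℝ):ℂ) • (Amat 1 ⊗ₖ Bmat 0)
  + ((1/6:ℝ):ℂ) • (Amat 2 ⊗ₖ Bmat 3) + ((1/6:ℝ):ℂ) • (Amat 3 ⊗ₖ Bmat 2)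
  + ((1/6:ℝ):ℂ) • (Amat 4 ⊗ₖ Bmat 4) + ((1/6:ℝ):ℂ) • (Amat 5 ⊗ₖ Bmat 5)
def om6 : Matrix (Q4 × Q4) (Q4 × Q4) ℂ :=
  ((1/6:ℝ):ℂ) • (Amat 0 ⊗ₖ Bmat 0) + ((1/6:ℝ):ℂ) • (Amat 1 ⊗ₖ Bmat 1)
  + ((1/6:ℝ):ℂ) • (Amat 2 ⊗ₖ Bmat 2) + ((1/6:ℝ):ℂ) • (Amat 3 ⊗ₖ Bmat 3)
  + ((1/6:ℝ):ℂ) • (Amat 4 ⊗ₖ Bmat 5) + ((1/6:ℝ):ℂ) • (Amat 5 ⊗ₖ Bmat 4)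

set_option maxHeartbeats 4000000 in
lemma main_identity :
    (1/2 : ℂ) • (vecMulVec PhiC (star PhiC) + sig6) = om6 := by
  have hva0 : va 0 = fun p => if p = (0,0) then 1 else 0 := rfl
  have hva1 : va 1 = fun p => if p = (1,1) then 1 else 0 := rfl
  have hva2 : va 2 = fun p => if p = (0,0) then 1 else if p = (1,1) then 1 else 0 := rfl
  have hva3 : va 3 = fun p => if p = (0,0) then 1 else if p = (1,1) then -1 else 0 := rfl
  have hva4 : va 4 = fun p => if p = (0,0) then 1 else if p = (1,1) then I else 0 := rfl
  have hva5 : va 5 = fun p => if p = (0,0) then 1 else if p = (1,1) then -I else 0 := rfl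
  have hvb0 : vb 0 = fun p => if p = (0,0) ∨ p = (1,1) then 1 else 0 := rfl
  have hvb1 : vb 1 = fun p => if p = (0,1) ∨ p = (1,0) then 1 else 0 := rfl
  have hvb2 : vb 2 = fun _ => 1 := rfl
  have hvb3 : vb 3 = fun p => if p = (0,0) ∨ p = (1,1) then 1 else -1 := rfl
  have hvb4 : vb 4 = fun p => if p = (0,0) ∨ p = (1,1) then 1 else I := rfl
  have hvb5 : vb 5 = fun p => if p = (0,0) ∨ p = (1,1) then 1 else -I := rfl
  have hca0 : ca 0 = 1 := rfl
  have hca1 : ca 1 = 1 := rfl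
  have hca2 : ca 2 = 1/2 := rfl
  have hca3 : ca 3 = 1/2 := rfl
  have hca4 : ca 4 = 1/2 := rfl
  have hca5 : ca 5 = 1/2 := rfl
  have hcb0 : cb 0 = 1/2 := rfl
  have hcb1 : cb 1 = 1/2 := rfl
  have hcb2 : cb 2 = 1/4 := rfl
  have hcb3 : cb 3 = 1/4 := rfl
  have hcb4 : cb 4 = 1/4 := rfl
  have hcb5 : cb 5 = 1/4 := rfl
  ext ⟨⟨a,b⟩,⟨c,d⟩⟩ ⟨⟨a',b'⟩,⟨c',d'⟩⟩
  simp only [sig6, om6, Amat, Bmat, Matrix.smul_apply, Matrix.add_apply,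
    Matrix.kroneckerMap_apply, Matrix.vecMulVec_apply, Pi.star_apply, smul_eq_mul,
    hva0, hva1, hva2, hva3, hva4, hva5, hvb0, hvb1, hvb2, hvb3, hvb4, hvb5,
    hca0, hca1, hca2, hca3, hca4, hca5, hcb0, hcb1, hcb2, hcb3, hcb4, hcb5, phi_val]
  fin_cases a <;> fin_cases b <;> fin_cases c <;> fin_cases d <;>
    fin_cases a' <;> fin_cases b' <;> fin_cases c' <;> fin_cases d' <;>
    norm_num [Prod.ext_iff, Complex.ext_iff]

lemma dmA : ∀ k : Fin 6, IsDensityMatrix (Amat k) := by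
  have h0 : IsDensityMatrix (Amat 0) := by
    refine dm_of_vec (va 0) (ca 0) (by norm_num [show ca 0 = 1 from rfl]) ?_
    rw [show va 0 = (fun p => if p = (0,0) then 1 else 0) from rfl, show ca 0 = 1 from rfl]
    simp [Fintype.sum_prod_type, Fin.sum_univ_two, Prod.ext_iff]
  have h1 : IsDensityMatrix (Amat 1) := by
    refine dm_of_vec (va 1) (ca 1) (by norm_num [show ca 1 = 1 from rfl]) ?_
    rw [show va 1 = (fun p => if p = (1,1) then 1 else 0) from rfl, show ca 1 = 1 from rfl]
    simp [Fintype.sum_prod_type, Fin.sum_univ_two, Prod.ext_iff]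
  have h2 : IsDensityMatrix (Amat 2) := by
    refine dm_of_vec (va 2) (ca 2) (by norm_num [show ca 2 = 1/2 from rfl]) ?_
    rw [show va 2 = (fun p => if p = (0,0) then 1 else if p = (1,1) then 1 else 0) from rfl,
      show ca 2 = 1/2 from rfl]
    simp [Fintype.sum_prod_type, Fin.sum_univ_two, Prod.ext_iff]
    try norm_num
  have h3 : IsDensityMatrix (Amat 3) := by
    refine dm_of_vec (va 3) (ca 3) (by norm_num [show ca 3 = 1/2 from rfl]) ?_
    rw [show va 3 = (fun p => if p = (0,0) then 1 else if p = (1,1) then -1 else 0) from rfl,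
      show ca 3 = 1/2 from rfl]
    simp [Fintype.sum_prod_type, Fin.sum_univ_two, Prod.ext_iff]
    try norm_num
  have h4 : IsDensityMatrix (Amat 4) := by
    refine dm_of_vec (va 4) (ca 4) (by norm_num [show ca 4 = 1/2 from rfl]) ?_
    rw [show va 4 = (fun p => if p = (0,0) then 1 else if p = (1,1) then I else 0) from rfl,
      show ca 4 = 1/2 from rfl]
    simp [Fintype.sum_prod_type, Fin.sum_univ_two, Prod.ext_iff, Complex.conj_I]
    try norm_num [Complex.ext_iff]
  have h5 : IsDensityMatrix (Amat 5) := by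
    refine dm_of_vec (va 5) (ca 5) (by norm_num [show ca 5 = 1/2 from rfl]) ?_
    rw [show va 5 = (fun p => if p = (0,0) then 1 else if p = (1,1) then -I else 0) from rfl,
      show ca 5 = 1/2 from rfl]
    simp [Fintype.sum_prod_type, Fin.sum_univ_two, Prod.ext_iff, Complex.conj_I]
    try norm_num [Complex.ext_iff]
  intro k
  fin_cases k
  exacts [h0, h1, h2, h3, h4, h5]

lemma dmB : ∀ k : Fin 6, IsDensityMatrix (Bmat k) := by
  have h0 : IsDensityMatrix (Bmat 0) := by
    refine dm_of_vec (vb 0) (cb 0) (by norm_num [show cb 0 = 1/2 from rfl]) ?_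
    rw [show vb 0 = (fun p => if p = (0,0) ∨ p = (1,1) then 1 else 0) from rfl,
      show cb 0 = 1/2 from rfl]
    simp [Fintype.sum_prod_type, Fin.sum_univ_two, Prod.ext_iff]
    try norm_num
  have h1 : IsDensityMatrix (Bmat 1) := by
    refine dm_of_vec (vb 1) (cb 1) (by norm_num [show cb 1 = 1/2 from rfl]) ?_
    rw [show vb 1 = (fun p => if p = (0,1) ∨ p = (1,0) then 1 else 0) from rfl,
      show cb 1 = 1/2 from rfl]
    simp [Fintype.sum_prod_type, Fin.sum_univ_two, Prod.ext_iff]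
    try norm_num
  have h2 : IsDensityMatrix (Bmat 2) := by
    refine dm_of_vec (vb 2) (cb 2) (by norm_num [show cb 2 = 1/4 from rfl]) ?_
    rw [show vb 2 = (fun _ => (1:ℂ)) from rfl, show cb 2 = 1/4 from rfl]
    simp [Fintype.sum_prod_type, Fin.sum_univ_two]
    try norm_num
  have h3 : IsDensityMatrix (Bmat 3) := by
    refine dm_of_vec (vb 3) (cb 3) (by norm_num [show cb 3 = 1/4 from rfl]) ?_
    rw [show vb 3 = (fun p => if p = (0,0) ∨ p = (1,1) then 1 else -1) from rfl,
      show cb 3 = 1/4 from rfl]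
    simp [Fintype.sum_prod_type, Fin.sum_univ_two, Prod.ext_iff]
    try norm_num
  have h4 : IsDensityMatrix (Bmat 4) := by
    refine dm_of_vec (vb 4) (cb 4) (by norm_num [show cb 4 = 1/4 from rfl]) ?_
    rw [show vb 4 = (fun p => if p = (0,0) ∨ p = (1,1) then 1 else I) from rfl,
      show cb 4 = 1/4 from rfl]
    simp [Fintype.sum_prod_type, Fin.sum_univ_two, Prod.ext_iff, Complex.conj_I]
    try norm_num [Complex.ext_iff]
  have h5 : IsDensityMatrix (Bmat 5) := by
    refine dm_of_vec (vb 5) (cb 5) (by norm_num [show cb 5 = 1/4 from rfl]) ?_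
    rw [show vb 5 = (fun p => if p = (0,0) ∨ p = (1,1) then 1 else -I) from rfl,
      show cb 5 = 1/4 from rfl]
    simp [Fintype.sum_prod_type, Fin.sum_univ_two, Prod.ext_iff, Complex.conj_I]
    try norm_num [Complex.ext_iff]
  intro k
  fin_cases k
  exacts [h0, h1, h2, h3, h4, h5]

lemma sep_sig6 : SeparableState sig6 := by
  refine ⟨6, fun _ => 1/6, ![Amat 0, Amat 1, Amat 2, Amat 3, Amat 4, Amat 5],
    ![Bmat 1, Bmat 0, Bmat 3, Bmat 2, Bmat 4, Bmat 5], fun k => by norm_num, ?_, ?_, ?_, ?_⟩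
  · simp
  · intro k; fin_cases k <;> first
    | exact dmA 0 | exact dmA 1 | exact dmA 2 | exact dmA 3 | exact dmA 4 | exact dmA 5
  · intro k; fin_cases k <;> first
    | exact dmB 0 | exact dmB 1 | exact dmB 2 | exact dmB 3 | exact dmB 4 | exact dmB 5
  · rw [Fin.sum_univ_six]
    rfl

lemma sep_om6 : SeparableState om6 := by
  refine ⟨6, fun _ => 1/6, ![Amat 0, Amat 1, Amat 2, Amat 3, Amat 4, Amat 5],
    ![Bmat 0, Bmat 1, Bmat 2, Bmat 3, Bmat 5, Bmat 4], fun k => by norm_num, ?_, ?_, ?_, ?_⟩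
  · simp
  · intro k; fin_cases k <;> first
    | exact dmA 0 | exact dmA 1 | exact dmA 2 | exact dmA 3 | exact dmA 4 | exact dmA 5
  · intro k; fin_cases k <;> first
    | exact dmB 0 | exact dmB 1 | exact dmB 2 | exact dmB 3 | exact dmB 4 | exact dmB 5
  · rw [Fin.sum_univ_six]
    rfl

/-! ### Putting everything together -/

lemma rob_eq : robustness (vecMulVec PhiC (star PhiC)) = 1 := by
  set ρ := vecMulVec PhiC (star PhiC) with hρ
  have hmem : (1:ℝ) ∈ { t : ℝ | 0 ≤ t ∧ ∃ σ : Matrix (Q4 × Q4) (Q4 × Q4) ℂ,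
      SeparableState σ ∧ SeparableState (((1 + t : ℝ) : ℂ)⁻¹ • (ρ + (t : ℂ) • σ)) } := by
    refine ⟨zero_le_one, sig6, sep_sig6, ?_⟩
    have he : (((1 + (1:ℝ) : ℝ)) : ℂ)⁻¹ • (ρ + ((1:ℝ) : ℂ) • sig6)
        = (1/2 : ℂ) • (ρ + sig6) := by
      norm_num
    rw [he, main_identity]
    exact sep_om6
  have hlb : ∀ t ∈ { t : ℝ | 0 ≤ t ∧ ∃ σ : Matrix (Q4 × Q4) (Q4 × Q4) ℂ,
      SeparableState σ ∧ SeparableState (((1 + t : ℝ) : ℂ)⁻¹ • (ρ + (t : ℂ) • σ)) },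
      (1:ℝ) ≤ t := by
    rintro t ⟨ht0, σw, hsσ, hsmix⟩
    have h1t : (0:ℝ) < 1 + t := by linarith
    set z := star PhiC ⬝ᵥ σw *ᵥ PhiC with hz
    have hnn := sep_nonneg hsσ
    obtain ⟨hre, him⟩ := Complex.nonneg_iff.mp hnn
    have hle := sep_le_half hsmix
    have hval : star PhiC ⬝ᵥ (((1 + t : ℝ) : ℂ)⁻¹ • (ρ + (t : ℂ) • σw)) *ᵥ PhiC
        = ((1 + t : ℝ) : ℂ)⁻¹ * (1 + (t : ℂ) * z) := by
      rw [dot_smul]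
      congr 1
      rw [Matrix.add_mulVec, dotProduct_add, hρ, rho_overlap]
      congr 1
      rw [dot_smul]
    rw [hval, ← Complex.ofReal_inv] at hle
    rw [Complex.re_ofReal_mul, Complex.add_re, Complex.re_ofReal_mul, Complex.one_re] at hle
    have hkey : 1 + t * z.re ≤ (1 + t) * (1/2) := by
      calc 1 + t * z.re = (1 + t) * ((1 + t)⁻¹ * (1 + t * z.re)) := by field_simp
        _ ≤ (1 + t) * (1/2) := mul_le_mul_of_nonneg_left hle h1t.le
    nlinarith [mul_nonneg ht0 (by simpa using hre : 0 ≤ z.re)]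
  exact le_antisymm (csInf_le ⟨0, fun x hx => hx.1⟩ hmem) (le_csInf ⟨1, hmem⟩ hlb)

theorem robustness_choi_CNOT :
    let U := toPair !![1, 0, 0, 0; 0, 1, 0, 0; 0, 0, 0, 1; 0, 0, 1, 0]
    let Φ := choiVec U
    1 + 2 * robustness (vecMulVec Φ (star Φ)) = 3 ∧
      robustness (vecMulVec Φ (star Φ)) = 1 := by
  intro U Φ
  have hΦ : Φ = PhiC := rfl
  rw [hΦ, rob_eq]
  norm_num
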